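/- Let x₀ = −√(12 − √128) and γ₀ = −(4 + 3x₀²)/(4x₀). Then for every γ > 0 one has x₀³ + 3γx₀² + (2γ² + 6)x₀ + 4γ ≤ 0, i.e. 2x₀γ² + (4 + 3x₀²)γ + (x₀³ + 6x₀) ≤ 0, with equality if and only if γ = γ₀. Consequently, for every γ > 0 the cubic x³ + 3γx² + (2γ² + 6)x + 4γ has a real root in the interval [x₀, 0), so its spectral gap (the absolute value of the largest real part of its roots) is at most −x₀, and this bound is attained exactly when γ = γ₀. -/

import Mathlib

/-- `x₀ = −√(12 − √128)`. -/
noncomputable def xzero : ℝ := -Real.sqrt (12 - Real.sqrt 128)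

/-- `γ₀ = −(4 + 3x₀²)/(4x₀)`, the optimal damping parameter. -/
noncomputable def gammazero : ℝ := -(4 + 3 * xzero^2) / (4 * xzero)

lemma sqrt128_lt : Real.sqrt 128 < 12 := by
  have : (128:ℝ) < 12^2 := by norm_num
  nlinarith [Real.sq_sqrt (by norm_num : (128:ℝ) ≥ 0),
    Real.sqrt_nonneg (128:ℝ)]

lemma xzero_neg : xzero < 0 := by
  have h : 0 < 12 - Real.sqrt 128 := by linarith [sqrt128_lt]
  have := Real.sqrt_pos.mpr h
  simp only [xzero]; linarith

lemma xzero_sq : xzero^2 = 12 - Real.sqrt 128 := by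
  have h : 0 ≤ 12 - Real.sqrt 128 := by linarith [sqrt128_lt]
  have h2 : xzero^2 = Real.sqrt (12 - Real.sqrt 128) ^ 2 := by
    rw [xzero]; ring
  rw [h2, Real.sq_sqrt h]

lemma s_eq : (xzero^2)^2 - 24*xzero^2 + 16 = 0 := by
  have h128 : Real.sqrt 128 ^ 2 = 128 := Real.sq_sqrt (by norm_num)
  rw [xzero_sq]; nlinarith [h128]

lemma key (g : ℝ) :
    2*xzero*g^2 + (4 + 3*xzero^2)*g + (xzero^3 + 6*xzero)
      = 2*xzero*(g - gammazero)^2 := by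
  have hx0 : xzero ≠ 0 := ne_of_lt xzero_neg
  have hs := s_eq
  rw [gammazero]
  field_simp
  linear_combination (-2) * hs

/-- For every `γ > 0`, the value of the cubic `x³ + 3γx² + (2γ²+6)x + 4γ` at `x₀`
is `≤ 0`, with equality iff `γ = γ₀`; consequently the cubic has a real root in
`[x₀, 0)`, so the spectral gap is at most `−x₀`, attained exactly at `γ = γ₀`. -/
theorem stmt17 (γ : ℝ) (hγ : 0 < γ) :
    xzero^3 + 3*γ*xzero^2 + (2*γ^2 + 6)*xzero + 4*γ ≤ 0 ∧
    2*xzero*γ^2 + (4 + 3*xzero^2)*γ + (xzero^3 + 6*xzero) ≤ 0 ∧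
    (xzero^3 + 3*γ*xzero^2 + (2*γ^2 + 6)*xzero + 4*γ = 0 ↔ γ = gammazero) ∧
    (∃ x : ℝ, xzero ≤ x ∧ x < 0 ∧ x^3 + 3*γ*x^2 + (2*γ^2 + 6)*x + 4*γ = 0) := by
  have hxneg := xzero_neg
  have hk := key γ
  have hform : xzero^3 + 3*γ*xzero^2 + (2*γ^2 + 6)*xzero + 4*γ
      = 2*xzero*γ^2 + (4 + 3*xzero^2)*γ + (xzero^3 + 6*xzero) := by ring
  have hle : 2*xzero*γ^2 + (4 + 3*xzero^2)*γ + (xzero^3 + 6*xzero) ≤ 0 := by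
    rw [hk]
    nlinarith [sq_nonneg (γ - gammazero)]
  refine ⟨by rw [hform]; exact hle, hle, ?_, ?_⟩
  · rw [hform, hk]
    constructor
    · intro h
      have h2 : (γ - gammazero)^2 = 0 := by
        rcases mul_eq_zero.mp h with h' | h'
        · exfalso; nlinarith [xzero_neg]
        · exact h'
      have := pow_eq_zero_iff (n := 2) (by norm_num) |>.mp h2
      linarith [this]
    · intro h; rw [h]; ring
  · -- IVT on [xzero, 0]
    set p : ℝ → ℝ := fun x => x^3 + 3*γ*x^2 + (2*γ^2 + 6)*x + 4*γ with hp
    have hpc : ContinuousOn p (Set.Icc xzero 0) := by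
      apply Continuous.continuousOn; fun_prop
    have hp0 : p 0 = 4*γ := by simp [hp]
    have hpa : p xzero ≤ 0 := by rw [hp]; simp only; rw [hform]; exact hle
    have hmem : (0:ℝ) ∈ Set.Ico (p xzero) (p 0) := ⟨hpa, by rw [hp0]; linarith⟩
    have := intermediate_value_Ico (le_of_lt hxneg) hpc hmem
    obtain ⟨x, hx, hpx⟩ := this
    exact ⟨x, hx.1, hx.2, hpx⟩
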